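/- Let P_1, ..., P_d be finite well-separated point sets in R^d, and let x_1, x_1' ∈ conv(P_1), ..., x_d, x_d' ∈ conv(P_d) be two colorful selections spanning hyperplanes H and H' with unit normals n̂ and n̂' chosen by the positive-determinant convention. If H = H' as sets, then n̂ = n̂'; that is, the orientation of a hyperplane transversal to all conv(P_i) does not depend on the choice of points x_i ∈ conv(P_i) ∩ H. -/

import Mathlib

open Set
open scoped RealInnerProductSpace

/-- `P` is well-separated: every colorful selection of points, one from the convex hull of
each of `k` distinct color classes, is affinely independent. -/
def WellSeparated {d : ℕ} (P : Fin d → Finset (EuclideanSpace ℝ (Fin d))) : Prop :=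
  ∀ (k : ℕ) (ι : Fin k → Fin d), Function.Injective ι →
    ∀ y : Fin k → EuclideanSpace ℝ (Fin d),
      (∀ j, y j ∈ convexHull ℝ (P (ι j) : Set (EuclideanSpace ℝ (Fin d)))) →
      AffineIndependent ℝ y

/-- The `(d+1) × (d+1)` matrix whose first `d` columns are the points `x j` with a `1`
appended, and whose last column is `v` with `c` appended. -/
def colMat {d : ℕ} (x : Fin d → EuclideanSpace ℝ (Fin d))
    (v : EuclideanSpace ℝ (Fin d)) (c : ℝ) : Matrix (Fin (d + 1)) (Fin (d + 1)) ℝ :=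
  Matrix.of fun i j =>
    if hi : (i : ℕ) < d then
      (if hj : (j : ℕ) < d then x ⟨j, hj⟩ ⟨i, hi⟩ else v ⟨i, hi⟩)
    else
      (if (j : ℕ) < d then (1 : ℝ) else c)

section Aux

variable {d : ℕ}

lemma colMat_cc (x : Fin d → EuclideanSpace ℝ (Fin d)) (v : EuclideanSpace ℝ (Fin d)) (c : ℝ)
    (i j : Fin d) : colMat x v c i.castSucc j.castSucc = x j i := by
  simp [colMat, i.is_lt, j.is_lt]

lemma colMat_cl (x : Fin d → EuclideanSpace ℝ (Fin d)) (v : EuclideanSpace ℝ (Fin d)) (c : ℝ)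
    (i : Fin d) : colMat x v c i.castSucc (Fin.last d) = v i := by
  simp [colMat, i.is_lt]

lemma colMat_lc (x : Fin d → EuclideanSpace ℝ (Fin d)) (v : EuclideanSpace ℝ (Fin d)) (c : ℝ)
    (j : Fin d) : colMat x v c (Fin.last d) j.castSucc = 1 := by
  simp [colMat, j.is_lt]

lemma colMat_ll (x : Fin d → EuclideanSpace ℝ (Fin d)) (v : EuclideanSpace ℝ (Fin d)) (c : ℝ) :
    colMat x v c (Fin.last d) (Fin.last d) = c := by
  simp [colMat]

/-- If the points all lie on the hyperplane with unit normal `n` and are affinely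
independent, the determinant does not vanish. -/
lemma det_colMat_ne_zero (x : Fin d → EuclideanSpace ℝ (Fin d))
    (n : EuclideanSpace ℝ (Fin d)) (t : ℝ) (hn : ‖n‖ = 1)
    (hai : AffineIndependent ℝ x) (ht : ∀ i, ⟪x i, n⟫ = t) :
    (colMat x n 0).det ≠ 0 := by
  intro h
  obtain ⟨v, hv0, hv⟩ := Matrix.exists_mulVec_eq_zero_iff.2 h
  set g : Fin d → ℝ := fun j => v j.castSucc with hg
  set a : ℝ := v (Fin.last d) with ha
  have hrow : ∀ i : Fin (d + 1),
      (∑ j : Fin d, colMat x n 0 i j.castSucc * v j.castSucc)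
        + colMat x n 0 i (Fin.last d) * a = 0 := by
    intro i
    have := congrFun hv i
    simpa [Matrix.mulVec, dotProduct, Fin.sum_univ_castSucc] using this
  -- last row : sum of weights is zero
  have hwsum : ∑ j : Fin d, g j = 0 := by
    have := hrow (Fin.last d)
    simpa [colMat_lc, colMat_ll] using this
  -- rows i < d
  have hcomp : ∀ i : Fin d, (∑ j : Fin d, x j i * g j) + n i * a = 0 := by
    intro i
    have := hrow i.castSucc
    simpa [colMat_cc, colMat_cl, mul_comm] using this
  have hnn : (∑ i : Fin d, n i * n i) = 1 := by
    have : ⟪n, n⟫ = 1 := by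
      rw [real_inner_self_eq_norm_sq, hn]; norm_num
    rw [PiLp.inner_apply] at this
    simpa [PiLp.inner_apply, RCLike.inner_apply, mul_comm, sq] using this
  have hxn : ∀ j : Fin d, (∑ i : Fin d, x j i * n i) = t := by
    intro j
    have := ht j
    simpa [PiLp.inner_apply, RCLike.inner_apply, mul_comm] using this
  -- take inner product of the relation with n
  have ha0 : a = 0 := by
    have h0 : ∑ i : Fin d, ((∑ j : Fin d, x j i * g j) + n i * a) * n i = 0 := by
      simp only [hcomp, zero_mul, Finset.sum_const_zero]
    have h1 : ∑ i : Fin d, ((∑ j : Fin d, x j i * g j) + n i * a) * n i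
        = (∑ j : Fin d, g j * (∑ i : Fin d, x j i * n i)) + a * ∑ i : Fin d, n i * n i := by
      simp_rw [add_mul, Finset.sum_add_distrib, Finset.sum_mul, Finset.mul_sum]
      rw [Finset.sum_comm]
      congr 1
      · exact Finset.sum_congr rfl fun j _ => Finset.sum_congr rfl fun i _ => by ring
      · exact Finset.sum_congr rfl fun i _ => by ring
    rw [h1] at h0
    simp only [hxn, hnn, mul_one] at h0
    rw [← Finset.sum_mul, hwsum, zero_mul, zero_add] at h0
    exact h0
  -- so the points satisfy an affine dependence
  have hvec : ∑ j : Fin d, g j • x j = 0 := by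
    ext i
    have := hcomp i
    rw [ha0, mul_zero, add_zero] at this
    have happ : ∀ u : Finset (Fin d), (∑ j ∈ u, g j • x j) i = ∑ j ∈ u, g j * x j i := by
      intro u
      classical
      induction u using Finset.induction with
      | empty => simp
      | insert _ _ h ih => simp [Finset.sum_insert h, ih]
    show (∑ j : Fin d, g j • x j) i = (0 : EuclideanSpace ℝ (Fin d)) i
    have hz : (0 : EuclideanSpace ℝ (Fin d)) i = 0 := rfl
    rw [happ, hz, ← this]
    exact Finset.sum_congr rfl fun j _ => mul_comm _ _
  have hg0 : ∀ j : Fin d, g j = 0 := by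
    intro j
    exact affineIndependent_iff.1 hai Finset.univ g (by simpa using hwsum)
      (by simpa using hvec) j (Finset.mem_univ j)
  apply hv0
  funext i
  induction i using Fin.lastCases with
  | last => exact ha0
  | cast i => exact hg0 i

lemma det_colMat_neg (x : Fin d → EuclideanSpace ℝ (Fin d)) (n : EuclideanSpace ℝ (Fin d)) :
    (colMat x (-n) 0).det = -(colMat x n 0).det := by
  have key : colMat x (-n) 0
      = (colMat x n 0).updateCol (Fin.last d)
          ((-1 : ℝ) • fun i => colMat x n 0 i (Fin.last d)) := by
    ext i j
    induction j using Fin.lastCases with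
    | last =>
      rw [Matrix.updateCol_apply, if_pos rfl]
      induction i using Fin.lastCases with
      | last => simp [colMat_ll]
      | cast i => simp [colMat_cl]
    | cast j =>
      rw [Matrix.updateCol_apply, if_neg (Fin.castSucc_lt_last j).ne]
      induction i using Fin.lastCases with
      | last => simp [colMat_lc]
      | cast i => simp [colMat_cc]
  rw [key, Matrix.det_updateCol_smul, Matrix.updateCol_eq_self]
  ring

/-- sign propagation along the hyperplane: if both colorful selections lie on the same
hyperplane with unit normal `n`, their determinants (with the same normal) have the
same sign. -/
lemma det_colMat_pos (P : Fin d → Finset (EuclideanSpace ℝ (Fin d))) (hws : WellSeparated P)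
    (x x' : Fin d → EuclideanSpace ℝ (Fin d)) (n : EuclideanSpace ℝ (Fin d)) (t : ℝ)
    (hx : ∀ i, x i ∈ convexHull ℝ (P i : Set (EuclideanSpace ℝ (Fin d))))
    (hx' : ∀ i, x' i ∈ convexHull ℝ (P i : Set (EuclideanSpace ℝ (Fin d))))
    (hn : ‖n‖ = 1)
    (ht : ∀ i, ⟪x i, n⟫ = t) (ht' : ∀ i, ⟪x' i, n⟫ = t)
    (hdet : 0 < (colMat x n 0).det) : 0 < (colMat x' n 0).det := by
  set y : ℝ → Fin d → EuclideanSpace ℝ (Fin d) :=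
    fun s i => (1 - s) • x i + s • x' i with hy
  set f : ℝ → ℝ := fun s => (colMat (y s) n 0).det with hf
  have hymem : ∀ s ∈ Icc (0:ℝ) 1, ∀ i,
      y s i ∈ convexHull ℝ (P i : Set (EuclideanSpace ℝ (Fin d))) := by
    intro s hs i
    exact (convex_convexHull ℝ _) (hx i) (hx' i) (by linarith [hs.2]) hs.1 (by ring)
  have hyt : ∀ s, ∀ i, ⟪y s i, n⟫ = t := by
    intro s i
    simp only [hy, inner_add_left, real_inner_smul_left, ht, ht']
    ring
  have hne : ∀ s ∈ Icc (0:ℝ) 1, f s ≠ 0 := by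
    intro s hs
    refine det_colMat_ne_zero (y s) n t hn ?_ (hyt s)
    exact hws d id Function.injective_id (y s) (fun j => hymem s hs j)
  have hcont : Continuous f := by
    apply Continuous.matrix_det
    apply continuous_matrix
    intro i j
    by_cases hi : (i : ℕ) < d
    · by_cases hj : (j : ℕ) < d
      · simp only [colMat, Matrix.of_apply, dif_pos hi, dif_pos hj, hy,
          PiLp.add_apply, PiLp.smul_apply, smul_eq_mul]
        fun_prop
      · simp only [colMat, Matrix.of_apply, dif_pos hi, dif_neg hj]
        exact continuous_const
    · simp only [colMat, Matrix.of_apply, dif_neg hi]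
      exact continuous_const
  have hf0 : f 0 = (colMat x n 0).det := by
    simp [hf, hy]
  have hf1 : f 1 = (colMat x' n 0).det := by
    simp [hf, hy]
  by_contra hle
  push_neg at hle
  have h1ne : f 1 ≠ 0 := hne 1 (by constructor <;> norm_num)
  have hlt : f 1 < 0 := by
    rw [hf1] at h1ne ⊢
    exact lt_of_le_of_ne hle h1ne
  have : (0:ℝ) ∈ Icc (f 1) (f 0) := ⟨hlt.le, by rw [hf0]; exact hdet.le⟩
  obtain ⟨s, hs, hfs⟩ := intermediate_value_Icc' (by norm_num : (0:ℝ) ≤ 1)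
    hcont.continuousOn this
  exact hne s hs hfs

end Aux

theorem orientation_independent_of_colorful_selection
    {d : ℕ} (P : Fin d → Finset (EuclideanSpace ℝ (Fin d))) (hws : WellSeparated P)
    (x x' : Fin d → EuclideanSpace ℝ (Fin d))
    (n n' : EuclideanSpace ℝ (Fin d)) (t t' : ℝ)
    (hx : ∀ i, x i ∈ convexHull ℝ (P i : Set (EuclideanSpace ℝ (Fin d))))
    (hx' : ∀ i, x' i ∈ convexHull ℝ (P i : Set (EuclideanSpace ℝ (Fin d))))
    (hn : ‖n‖ = 1) (hn' : ‖n'‖ = 1)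
    (ht : ∀ i, ⟪x i, n⟫ = t) (ht' : ∀ i, ⟪x' i, n'⟫ = t')
    (hdet : 0 < (colMat x n 0).det) (hdet' : 0 < (colMat x' n' 0).det)
    (hH : {y : EuclideanSpace ℝ (Fin d) | ⟪y, n⟫ = t} =
      {y : EuclideanSpace ℝ (Fin d) | ⟪y, n'⟫ = t'}) :
    n = n' := by
  have hHiff : ∀ y : EuclideanSpace ℝ (Fin d), ⟪y, n⟫ = t ↔ ⟪y, n'⟫ = t' := by
    intro y
    constructor
    · intro h; exact (hH ▸ (h : y ∈ {y | ⟪y, n⟫ = t}) : y ∈ {y | ⟪y, n'⟫ = t'})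
    · intro h; exact (hH.symm ▸ (h : y ∈ {y | ⟪y, n'⟫ = t'}) : y ∈ {y | ⟪y, n⟫ = t})
  have hnn : ⟪n, n⟫ = 1 := by
    rw [real_inner_self_eq_norm_sq, hn]; norm_num
  -- n' is a multiple of n
  set c : ℝ := ⟪n', n⟫ with hc
  set w : EuclideanSpace ℝ (Fin d) := n' - c • n with hw
  have hwn : ⟪w, n⟫ = 0 := by
    simp only [hw, inner_sub_left, real_inner_smul_left, hnn, mul_one, hc, sub_self]
  have htn : ⟪t • n, n⟫ = t := by
    rw [real_inner_smul_left, hnn, mul_one]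
  have h1 : ⟪t • n, n'⟫ = t' := (hHiff _).1 htn
  have h2 : ⟪t • n + w, n'⟫ = t' := by
    refine (hHiff _).1 ?_
    rw [inner_add_left, htn, hwn, add_zero]
  have hwn' : ⟪w, n'⟫ = 0 := by
    have := h2
    rw [inner_add_left, h1] at this
    linarith
  have hw0 : w = 0 := by
    have : ⟪w, w⟫ = 0 := by
      have h3 : ⟪w, n' - c • n⟫ = 0 := by
        rw [inner_sub_right, hwn', real_inner_smul_right, hwn, mul_zero, sub_zero]
      simpa [hw] using h3
    exact inner_self_eq_zero.1 this
  have hn'c : n' = c • n := by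
    have := hw0
    rw [hw, sub_eq_zero] at this
    exact this
  have hcabs : |c| = 1 := by
    have : ‖n'‖ = |c| * ‖n‖ := by rw [hn'c, norm_smul, Real.norm_eq_abs]
    rw [hn, hn', mul_one] at this
    exact this.symm
  rcases abs_eq (by norm_num : (0:ℝ) ≤ 1) |>.1 hcabs with hc1 | hc1
  · rw [hn'c, hc1, one_smul]
  · -- c = -1 : derive a contradiction from the determinant signs
    exfalso
    have hn'neg : n' = -n := by rw [hn'c, hc1, neg_one_smul]
    -- x' lies on the hyperplane with normal n
    have ht'' : ∀ i, ⟪x' i, n⟫ = t := fun i => (hHiff _).2 (ht' i)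
    have hpos : 0 < (colMat x' n 0).det :=
      det_colMat_pos P hws x x' n t hx hx' hn ht ht'' hdet
    rw [hn'neg, det_colMat_neg] at hdet'
    linarith
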